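/- Define S_1^{(n)}(u;ℏ) = ℏ Σ_{i=1}^n (u - z_n + ℏσ_{i,n})···(u - z_{i+1} + ℏσ_{i,i+1})(u - z_{i-1})···(u - z_1) in C[S_n][u]. Then S_1^{(n)}(u;ℏ) = Σ_{j=1}^n Σ_{1 ≤ i_1 < ··· < i_j ≤ n} ℏ^j σ_{i_1,i_j} σ_{i_1,i_{j-1}} ··· σ_{i_1,i_2} ∏_{a ∉ {i_1,...,i_j}} (u - z_a), where for j = 1 the empty product of transpositions is the identity. -/

import Mathlib

open Polynomial

lemma expand_prod {α R : Type*} [DecidableEq α] [Ring R] (f g : α → R)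
    (hf : ∀ a x, Commute (f a) x) :
    ∀ (l : List α), l.Nodup →
      (l.map (fun a => f a + g a)).prod
        = ∑ t ∈ l.toFinset.powerset,
            ((l.filter (· ∈ t)).map g).prod * ((l.filter (· ∉ t)).map f).prod := by
  intro l
  induction l with
  | nil => simp
  | cons a l ih =>
    intro hnd
    have ha : a ∉ l := (List.nodup_cons.mp hnd).1
    have hnd' : l.Nodup := (List.nodup_cons.mp hnd).2
    have hat : a ∉ l.toFinset := by simpa using ha
    have hdisj : Disjoint l.toFinset.powerset (l.toFinset.powerset.image (insert a)) := by
      rw [Finset.disjoint_left]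
      intro t ht ht'
      obtain ⟨u, hu, rfl⟩ := Finset.mem_image.mp ht'
      exact hat (Finset.mem_powerset.mp ht (Finset.mem_insert_self a u))
    rw [List.map_cons, List.prod_cons, ih hnd', List.toFinset_cons, Finset.powerset_insert,
      Finset.sum_union hdisj, Finset.sum_image (fun x hx y hy hxy => by
        have hx' : a ∉ x := fun h => hat (Finset.mem_powerset.mp hx h)
        have hy' : a ∉ y := fun h => hat (Finset.mem_powerset.mp hy h)
        rw [← Finset.erase_insert hx', hxy, Finset.erase_insert hy'])]
    have key1 : ∀ t ∈ l.toFinset.powerset,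
        (((a::l).filter (· ∈ t)).map g).prod * (((a::l).filter (· ∉ t)).map f).prod
          = f a * ((l.filter (· ∈ t)).map g).prod * ((l.filter (· ∉ t)).map f).prod := by
      intro t ht
      have hat' : a ∉ t := fun h => hat (Finset.mem_powerset.mp ht h)
      rw [List.filter_cons_of_neg (by simpa using hat'), List.filter_cons_of_pos (by simpa using hat'),
        List.map_cons, List.prod_cons, ← mul_assoc, (hf a _).eq]
    have key2 : ∀ t ∈ l.toFinset.powerset,
        (((a::l).filter (· ∈ insert a t)).map g).prod * (((a::l).filter (· ∉ insert a t)).map f).prod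
          = g a * (((l.filter (· ∈ t)).map g).prod * ((l.filter (· ∉ t)).map f).prod) := by
      intro t ht
      have h1 : (a::l).filter (· ∈ insert a t) = a :: l.filter (· ∈ t) := by
        rw [List.filter_cons_of_pos (by simp)]
        congr 1
        refine List.filter_congr fun x hx => ?_
        have : x ≠ a := fun h => ha (h ▸ hx)
        simp [Finset.mem_insert, this]
      have h2 : (a::l).filter (· ∉ insert a t) = l.filter (· ∉ t) := by
        rw [List.filter_cons_of_neg (by simp)]
        refine List.filter_congr fun x hx => ?_
        have : x ≠ a := fun h => ha (h ▸ hx)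
        simp [Finset.mem_insert, this]
      rw [h1, h2, List.map_cons, List.prod_cons, mul_assoc]
    rw [Finset.sum_congr rfl key1, Finset.sum_congr rfl key2, add_mul, Finset.mul_sum,
      Finset.mul_sum]
    congr 1
    exact Finset.sum_congr rfl fun t ht => by rw [mul_assoc]

variable {n : ℕ}

noncomputable def ee (z : Fin n → ℂ) (a : Fin n) :
    Polynomial (MonoidAlgebra ℂ (Equiv.Perm (Fin n))) :=
  Polynomial.X - Polynomial.C (algebraMap ℂ (MonoidAlgebra ℂ (Equiv.Perm (Fin n))) (z a))

lemma ee_comm (z : Fin n → ℂ) (a : Fin n) (x : Polynomial (MonoidAlgebra ℂ (Equiv.Perm (Fin n)))) :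
    Commute (ee z a) x := by
  refine Commute.sub_left (Polynomial.commute_X x) ?_
  have : (Polynomial.C (algebraMap ℂ (MonoidAlgebra ℂ (Equiv.Perm (Fin n))) (z a)))
      = algebraMap ℂ (Polynomial (MonoidAlgebra ℂ (Equiv.Perm (Fin n)))) (z a) := rfl
  rw [this]
  exact (Algebra.commutes (z a) x)

lemma swapprod (ℏ : ℂ) (i : Fin n) (L : List (Fin n)) :
    (L.map fun a => Polynomial.C (ℏ • MonoidAlgebra.of ℂ (Equiv.Perm (Fin n)) (Equiv.swap i a))).prod
      = Polynomial.C (ℏ ^ L.length •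
          MonoidAlgebra.of ℂ (Equiv.Perm (Fin n)) ((L.map fun a => Equiv.swap i a).prod)) := by
  induction L with
  | nil => rw [List.map_nil, List.map_nil, List.prod_nil, List.prod_nil, List.length_nil, pow_zero, one_smul, map_one, map_one]
  | cons b L ih =>
    simp only [List.map_cons, List.prod_cons, ih, ← Polynomial.C_mul, List.length_cons]
    congr 1
    rw [smul_mul_smul_comm, ← map_mul, pow_succ']

lemma eprod_perm (z : Fin n → ℂ) {L1 L2 : List (Fin n)} (h : L1.Perm L2) :
    (L1.map (ee z)).prod = (L2.map (ee z)).prod := by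
  refine List.Perm.prod_eq' (h.map _) (List.pairwise_map.mpr ?_)
  exact List.pairwise_iff_forall_sublist.mpr fun {x y} _ => ee_comm z _ _

lemma filtfin (t : Finset (Fin n)) :
    (List.finRange n).filter (· ∈ t) = t.sort (· ≤ ·) := by
  refine (fun h1 h2 => List.Perm.eq_of_pairwise' h2 (Finset.pairwise_sort _ _) h1) ?_ ?_
  · refine (List.perm_ext_iff_of_nodup ?_ ?_).mpr ?_
    · exact (List.nodup_finRange n).filter _
    · exact Finset.sort_nodup _ _
    · intro a; simp [List.mem_filter]
  · refine List.Pairwise.sublist List.filter_sublist ?_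
    exact (List.pairwise_lt_finRange n).imp le_of_lt

/-- the expansion of
`S_1^{(n)}(u;ℏ) = ℏ Σ_{i=1}^n (u - z_n + ℏσ_{i,n})⋯(u - z_{i+1} + ℏσ_{i,i+1})(u - z_{i-1})⋯(u - z_1)`
in `ℂ[S_n][u]` as
`Σ_{j=1}^n Σ_{i_1<⋯<i_j} ℏ^j σ_{i_1,i_j}σ_{i_1,i_{j-1}}⋯σ_{i_1,i_2} ∏_{a∉{i_1,...,i_j}} (u - z_a)`.
Subsets `s` of `{1,...,n}` of cardinality `j ≥ 1` encode the tuples `i_1 < ⋯ < i_j`. -/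
theorem stmt_18 (n : ℕ) (z : Fin n → ℂ) (ℏ : ℂ) :
    Polynomial.C (algebraMap ℂ (MonoidAlgebra ℂ (Equiv.Perm (Fin n))) ℏ) *
      ∑ i : Fin n,
        (((List.finRange n).reverse.filter (fun a => a ≠ i)).map
          (fun a =>
            if i < a then
              Polynomial.X
                - Polynomial.C (algebraMap ℂ (MonoidAlgebra ℂ (Equiv.Perm (Fin n))) (z a))
                + Polynomial.C (ℏ • MonoidAlgebra.of ℂ (Equiv.Perm (Fin n)) (Equiv.swap i a))
            else
              Polynomial.X
                - Polynomial.C (algebraMap ℂ (MonoidAlgebra ℂ (Equiv.Perm (Fin n))) (z a)))).prod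
    = ∑ s : Finset (Fin n),
        if hs : s.Nonempty then
          Polynomial.C ((ℏ ^ s.card) •
              MonoidAlgebra.of ℂ (Equiv.Perm (Fin n))
                (((s.sort (· ≤ ·)).tail.reverse.map (fun b => Equiv.swap (s.min' hs) b)).prod))
            * (((List.finRange n).filter (fun a => a ∉ s)).map
                (fun a => Polynomial.X
                  - Polynomial.C (algebraMap ℂ (MonoidAlgebra ℂ (Equiv.Perm (Fin n))) (z a)))).prod
        else 0 := by
  rcases Nat.eq_zero_or_pos n with hn | hn
  · subst hn
    have h1 : (Finset.univ : Finset (Fin 0)) = ∅ := Finset.univ_eq_empty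
    rw [h1, Finset.sum_empty, mul_zero]
    refine (Finset.sum_eq_zero fun s _ => ?_).symm
    rw [dif_neg]
    rintro ⟨a, -⟩
    exact a.elim0
  · -- notation
    set G := Equiv.Perm (Fin n) with hG
    set A := MonoidAlgebra ℂ G with hA
    let l : Fin n → List (Fin n) := fun i => (List.finRange n).reverse.filter (fun a => a ≠ i)
    let D : Fin n → Fin n → Polynomial A := fun i a =>
      Polynomial.C (ℏ • MonoidAlgebra.of ℂ G (Equiv.swap i a))
    have hnd : ∀ i : Fin n, (l i).Nodup := fun i => (List.nodup_reverse.mpr (List.nodup_finRange n)).filter _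
    have hmeml : ∀ i a : Fin n, a ∈ l i ↔ a ≠ i := by
      intro i a; simp [l]
    -- step 1 : expansion of each factor product
    have step1 : ∀ i : Fin n,
        ((l i).map (fun a => if i < a then ee z a + D i a else ee z a)).prod
          = ∑ t ∈ Finset.univ.filter (fun t : Finset (Fin n) => ∀ a ∈ t, i < a),
              (((l i).filter (· ∈ t)).map (D i)).prod
                * (((l i).filter (· ∉ t)).map (ee z)).prod := by
      intro i
      have h0 : (fun a => if i < a then ee z a + D i a else ee z a)
          = fun a => ee z a + (if i < a then D i a else 0) := funext fun a => by
        split <;> simp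
      rw [h0, expand_prod _ _ (fun a x => ee_comm z a x) _ (hnd i),
        ← Finset.sum_filter_add_sum_filter_not ((l i).toFinset.powerset)
          (fun t => ∀ a ∈ t, i < a)]
      have hz : ∑ t ∈ ((l i).toFinset.powerset).filter (fun t => ¬ ∀ a ∈ t, i < a),
          (((l i).filter (· ∈ t)).map (fun a => if i < a then D i a else 0)).prod
            * (((l i).filter (· ∉ t)).map (ee z)).prod = 0 := by
        refine Finset.sum_eq_zero fun t ht => ?_
        simp only [Finset.mem_filter, Finset.mem_powerset] at ht
        obtain ⟨ht1, ht2⟩ := ht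
        push_neg at ht2
        obtain ⟨a, hat, hia⟩ := ht2
        have hal : a ∈ l i := List.mem_toFinset.mp (ht1 hat)
        have hmem : a ∈ (l i).filter (· ∈ t) :=
          List.mem_filter.mpr ⟨hal, by simpa using hat⟩
        have h0mem : (0 : Polynomial A)
            ∈ ((l i).filter (· ∈ t)).map (fun a => if i < a then D i a else 0) :=
          List.mem_map.mpr ⟨a, hmem, by simp [hia]⟩
        rw [List.prod_eq_zero h0mem, zero_mul]
      rw [hz, add_zero]
      have hset : ((l i).toFinset.powerset).filter (fun t => ∀ a ∈ t, i < a)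
          = Finset.univ.filter (fun t : Finset (Fin n) => ∀ a ∈ t, i < a) := by
        refine Finset.ext fun t => ?_
        simp only [Finset.mem_filter, Finset.mem_powerset, Finset.mem_univ, true_and,
          and_iff_right_iff_imp]
        intro h a hat
        exact List.mem_toFinset.mpr ((hmeml i a).mpr (h a hat).ne')
      rw [hset]
      refine Finset.sum_congr rfl fun t ht => ?_
      have ht' : ∀ a ∈ t, i < a := (Finset.mem_filter.mp ht).2
      congr 1
      refine congrArg List.prod (List.map_congr_left fun a hat => ?_)
      have hatt : a ∈ t := by simpa using (List.mem_filter.mp hat).2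
      rw [if_pos (ht' a hatt)]
    -- key per-term identity
    have key : ∀ (i : Fin n) (t : Finset (Fin n)), (∀ a ∈ t, i < a) →
        Polynomial.C (algebraMap ℂ A ℏ) *
          ((((l i).filter (· ∈ t)).map (D i)).prod * (((l i).filter (· ∉ t)).map (ee z)).prod)
        = (if hs : (insert i t).Nonempty then
            Polynomial.C ((ℏ ^ (insert i t).card) •
                MonoidAlgebra.of ℂ G
                  ((((insert i t).sort (· ≤ ·)).tail.reverse.map
                      (fun b => Equiv.swap ((insert i t).min' hs) b)).prod))
              * (((List.finRange n).filter (fun a => a ∉ insert i t)).map (ee z)).prod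
          else 0) := by
      intro i t hP
      have hit : i ∉ t := fun h => lt_irrefl i (hP i h)
      have hne : (insert i t).Nonempty := ⟨i, Finset.mem_insert_self i t⟩
      rw [dif_pos hne]
      have hmin : (insert i t).min' hne = i :=
        le_antisymm
          (Finset.min'_le _ i (Finset.mem_insert_self i t))
          (Finset.le_min' _ _ _ fun b hb => by
            rcases Finset.mem_insert.mp hb with rfl | hb
            exacts [le_refl _, (hP b hb).le])
      have hsort : (insert i t).sort (· ≤ ·) = i :: t.sort (· ≤ ·) :=
        Finset.sort_insert _ (fun b hb => (hP b hb).le) hit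
      have hcard : (insert i t).card = t.card + 1 := Finset.card_insert_of_notMem hit
      have hli : l i = ((List.finRange n).filter (fun a => a ≠ i)).reverse :=
        List.filter_reverse
      have hf1 : (l i).filter (· ∈ t) = (t.sort (· ≤ ·)).reverse := by
        rw [hli, List.filter_reverse]
        congr 1
        rw [List.filter_filter, ← filtfin t]
        refine List.filter_congr fun a _ => ?_
        by_cases hat : a ∈ t
        · have hai : a ≠ i := (hP a hat).ne'
          simp [hat, hai]
        · simp [hat]
      have hf2 : (l i).filter (· ∉ t)
          = ((List.finRange n).filter (fun a => a ∉ insert i t)).reverse := by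
        rw [hli, List.filter_reverse]
        congr 1
        rw [List.filter_filter]
        refine List.filter_congr fun a _ => ?_
        by_cases hai : a = i
        · subst hai; simp [hit]
        · by_cases hat : a ∈ t <;> simp [hai, hat]
      rw [hmin, hsort, List.tail_cons, hf1, hf2]
      have hrev : ((((List.finRange n).filter (fun a => a ∉ insert i t)).reverse).map
            (ee z)).prod
          = (((List.finRange n).filter (fun a => a ∉ insert i t)).map (ee z)).prod :=
        eprod_perm z (List.reverse_perm _)
      rw [hrev, swapprod, ← mul_assoc, ← Polynomial.C_mul]
      congr 2
      rw [List.length_reverse, Finset.length_sort, hcard, ← Algebra.smul_def, smul_smul,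
        ← pow_succ']
    -- assemble
    have hLHS : ∀ i : Fin n,
        (((List.finRange n).reverse.filter (fun a => a ≠ i)).map
          (fun a =>
            if i < a then
              Polynomial.X
                - Polynomial.C (algebraMap ℂ (MonoidAlgebra ℂ (Equiv.Perm (Fin n))) (z a))
                + Polynomial.C (ℏ • MonoidAlgebra.of ℂ (Equiv.Perm (Fin n)) (Equiv.swap i a))
            else
              Polynomial.X
                - Polynomial.C (algebraMap ℂ (MonoidAlgebra ℂ (Equiv.Perm (Fin n))) (z a)))).prod
        = ((l i).map (fun a => if i < a then ee z a + D i a else ee z a)).prod := fun i => rfl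
    simp only [hLHS]
    simp only [step1]
    rw [Finset.mul_sum]
    simp only [Finset.mul_sum]
    rw [Finset.sum_sigma' Finset.univ
      (fun i : Fin n => Finset.univ.filter (fun t : Finset (Fin n) => ∀ a ∈ t, i < a))
      (fun i t => Polynomial.C (algebraMap ℂ A ℏ) *
        ((((l i).filter (· ∈ t)).map (D i)).prod * (((l i).filter (· ∉ t)).map (ee z)).prod))]
    have hmain := Finset.sum_nbij'
      (i := fun p : (_ : Fin n) × Finset (Fin n) => insert p.1 p.2)
      (j := fun s : Finset (Fin n) =>
        (⟨if h : s.Nonempty then s.min' h else ⟨0, hn⟩,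
          s.erase (if h : s.Nonempty then s.min' h else ⟨0, hn⟩)⟩ : (_ : Fin n) × Finset (Fin n)))
      (s := Finset.univ.sigma
        (fun i : Fin n => Finset.univ.filter (fun t : Finset (Fin n) => ∀ a ∈ t, i < a)))
      (t := Finset.univ.filter (fun s : Finset (Fin n) => s.Nonempty))
      (f := fun p => Polynomial.C (algebraMap ℂ A ℏ) *
        ((((l p.1).filter (· ∈ p.2)).map (D p.1)).prod
          * (((l p.1).filter (· ∉ p.2)).map (ee z)).prod))
      (g := fun s =>
        if hs : s.Nonempty then
          Polynomial.C ((ℏ ^ s.card) •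
              MonoidAlgebra.of ℂ G
                (((s.sort (· ≤ ·)).tail.reverse.map (fun b => Equiv.swap (s.min' hs) b)).prod))
            * (((List.finRange n).filter (fun a => a ∉ s)).map (ee z)).prod
        else 0)
      ?_ ?_ ?_ ?_ ?_
    · rw [hmain]
      refine Finset.sum_subset (Finset.filter_subset _ _) fun s _ hs => ?_
      rw [dif_neg (by simpa using hs)]
    · intro p hp
      simp [Finset.insert_nonempty]
    · intro s hs
      have hsne : s.Nonempty := by simpa using hs
      try dsimp only
      rw [Finset.mem_sigma]
      refine ⟨Finset.mem_univ _, ?_⟩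
      rw [Finset.mem_filter]
      refine ⟨Finset.mem_univ _, fun a ha => ?_⟩
      rw [dif_pos hsne] at ha ⊢
      exact lt_of_le_of_ne (Finset.min'_le s a (Finset.mem_of_mem_erase ha))
        (Finset.ne_of_mem_erase ha).symm
    · rintro ⟨i, t⟩ hp
      have hP : ∀ a ∈ t, i < a := by
        simpa using (Finset.mem_filter.mp (Finset.mem_sigma.mp hp).2).2
      have hit : i ∉ t := fun h => lt_irrefl i (hP i h)
      have hne : (insert i t).Nonempty := ⟨i, Finset.mem_insert_self i t⟩
      have hm : (if h : (insert i t).Nonempty then (insert i t).min' h else ⟨0, hn⟩) = i := by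
        rw [dif_pos hne]
        refine le_antisymm (Finset.min'_le _ i (Finset.mem_insert_self i t))
          (Finset.le_min' _ _ _ fun b hb => ?_)
        rcases Finset.mem_insert.mp hb with rfl | hb
        · exact le_refl _
        · exact (hP b hb).le
      simp only [hm, Finset.erase_insert hit]
    · intro s hs
      have hsne : s.Nonempty := by simpa using hs
      dsimp only
      rw [dif_pos hsne]
      exact Finset.insert_erase (Finset.min'_mem s hsne)
    · rintro ⟨i, t⟩ hp
      have hP : ∀ a ∈ t, i < a := by
        simpa using (Finset.mem_filter.mp (Finset.mem_sigma.mp hp).2).2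
      exact key i t hP
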